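/- On the 3-dimensional Heisenberg Lie algebra with bracket [e₂,e₃] = e₁ and commutative product e₂∘e₃ = e₁, e₃∘e₃ = e₂ (all other basis products zero), the triple (g, ∘, [,]) is an F_man-algebra (∘ is associative and the Hertling–Manin condition holds), the Leibnizator is non-zero (L(e₃,e₃,e₃) = -e₁), and the curvature R(u,v)w = -(1/4)[[u,v],w] + (1/2)(L(u,v,w) - L(v,u,w)) of the connection ∇_u v = (1/2)[u,v] + u∘v vanishes identically. -/

import Mathlib

variable {V : Type*} [AddCommGroup V] [Module ℝ V]

/-- The Leibnizator L(u,v,w) := [u, v∘w] - [u,v]∘w - v∘[u,w]. -/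
def Leib (mul br : V →ₗ[ℝ] V →ₗ[ℝ] V) (u v w : V) : V :=
  br u (mul v w) - mul (br u v) w - mul v (br u w)

/-- The canonical F-connection ∇_u v = (1/2)[u,v] + u∘v. -/
noncomputable def Conn (mul br : V →ₗ[ℝ] V →ₗ[ℝ] V) (u v : V) : V :=
  (2⁻¹ : ℝ) • br u v + mul u v

/-- The curvature R(u,v)w = ∇_u∇_v w - ∇_v∇_u w - ∇_{[u,v]} w. -/
noncomputable def Curv (mul br : V →ₗ[ℝ] V →ₗ[ℝ] V) (u v w : V) : V :=
  Conn mul br u (Conn mul br v w) - Conn mul br v (Conn mul br u w)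
    - Conn mul br (br u v) w

/-- Case (1b): Heisenberg algebra [e₂,e₃] = e₁ with product e₂∘e₃ = e₁,
e₃∘e₃ = e₂.  It is an F_man-algebra, the Leibnizator is non-zero
(L(e₃,e₃,e₃) = -e₁), and the curvature of the canonical connection
vanishes identically. -/
theorem heisenberg_A4 (b : Module.Basis (Fin 3) ℝ V) (mul br : V →ₗ[ℝ] V →ₗ[ℝ] V)
    (hcomm : ∀ u v, mul u v = mul v u)
    (hanti : ∀ u v, br u v = - br v u)
    (hjac : ∀ u v w, br u (br v w) = br (br u v) w + br v (br u w))
    (hb12 : br (b 1) (b 2) = b 0)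
    (hb01 : br (b 0) (b 1) = 0) (hb02 : br (b 0) (b 2) = 0)
    (hm12 : mul (b 1) (b 2) = b 0) (hm22 : mul (b 2) (b 2) = b 1)
    (hm00 : mul (b 0) (b 0) = 0) (hm01 : mul (b 0) (b 1) = 0)
    (hm02 : mul (b 0) (b 2) = 0) (hm11 : mul (b 1) (b 1) = 0) :
    (∀ u v w, mul (mul u v) w = mul u (mul v w)) ∧
    (∀ u v w y, Leib mul br (mul u v) w y
      = mul (Leib mul br u w y) v + mul u (Leib mul br v w y)) ∧
    Leib mul br (b 2) (b 2) (b 2) = - b 0 ∧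
    (∀ u v w, Curv mul br u v w = 0) := by

  have hself : ∀ u, br u u = 0 := by
    intro u
    have h := hanti u u
    rw [eq_neg_iff_add_eq_zero, ← two_smul ℝ] at h
    simpa using (smul_eq_zero.mp h).resolve_left (by norm_num)
  have hb21 : br (b 2) (b 1) = -b 0 := by rw [hanti, hb12]
  have hb10 : br (b 1) (b 0) = 0 := by rw [hanti, hb01, neg_zero]
  have hb20 : br (b 2) (b 0) = 0 := by rw [hanti, hb02, neg_zero]
  have hb00 : br (b 0) (b 0) = 0 := hself (b 0)
  have hb11 : br (b 1) (b 1) = 0 := hself (b 1)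
  have hb22 : br (b 2) (b 2) = 0 := hself (b 2)
  have hm10 : mul (b 1) (b 0) = 0 := by rw [hcomm, hm01]
  have hm20 : mul (b 2) (b 0) = 0 := by rw [hcomm, hm02]
  have hm21 : mul (b 2) (b 1) = b 0 := by rw [hcomm, hm12]
  refine ⟨?_, ?_, ?_, ?_⟩
  · intro u v w
    rw [← b.sum_repr u, ← b.sum_repr v, ← b.sum_repr w]
    simp only [Fin.sum_univ_three, map_add, map_smul, LinearMap.add_apply,
      LinearMap.smul_apply, hm00, hm01, hm02, hm10, hm11, hm12, hm20, hm21, hm22,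
      smul_zero, zero_add, add_zero, smul_neg, smul_smul, smul_add, map_zero,
      LinearMap.zero_apply, map_neg, LinearMap.neg_apply]
    module
  · intro u v w y
    rw [← b.sum_repr u, ← b.sum_repr v, ← b.sum_repr w, ← b.sum_repr y]
    simp only [Leib, Fin.sum_univ_three, map_add, map_smul, LinearMap.add_apply,
      LinearMap.smul_apply, hm00, hm01, hm02, hm10, hm11, hm12, hm20, hm21, hm22,
      hb00, hb01, hb02, hb10, hb11, hb12, hb20, hb21, hb22,
      smul_zero, zero_add, add_zero, smul_neg, smul_smul, smul_add, map_zero,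
      LinearMap.zero_apply, map_neg, LinearMap.neg_apply, map_sub, LinearMap.sub_apply]
    module
  · simp only [Leib, hm22, hb21, hb22, map_zero, LinearMap.zero_apply, hm20, hm02]
    module
  · intro u v w
    rw [← b.sum_repr u, ← b.sum_repr v, ← b.sum_repr w]
    simp only [Curv, Conn, Fin.sum_univ_three, map_add, map_smul, LinearMap.add_apply,
      LinearMap.smul_apply, hm00, hm01, hm02, hm10, hm11, hm12, hm20, hm21, hm22,
      hb00, hb01, hb02, hb10, hb11, hb12, hb20, hb21, hb22,
      smul_zero, zero_add, add_zero, smul_neg, smul_smul, smul_add, map_zero,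
      LinearMap.zero_apply, map_neg, LinearMap.neg_apply, map_sub, LinearMap.sub_apply]
    module
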